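/- Let X_1, …, X_N be sets and suppose the cost c : X_1 × ⋯ × X_N → ℝ decomposes as c(x_1,…,x_N) = ∑_{1≤i<j≤N} c_{i,j}(x_i,x_j) with each c_{i,j} : X_i × X_j → ℝ real-valued. Let Γ ⊆ X_1 × ⋯ × X_N and for each 1 ≤ i < j ≤ N let Γ_{i,j} be the projection of Γ onto X_i × X_j. If every Γ_{i,j} is c_{i,j}-cyclically monotone, then Γ is c-cyclically monotone in the multimarginal sense and, moreover, Γ is c-splitting: there exists a (Γ,c)-splitting tuple (φ_1, …, φ_N). -/

import Mathlib

/-- A set `S ⊆ X × Y` is `d`-cyclically monotone (two-marginal, real-valued cost). -/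
def CCyclicallyMonotone {X Y : Type*} (d : X → Y → ℝ) (S : Set (X × Y)) : Prop :=
  ∀ (k : ℕ) (p : Fin k → X × Y), (∀ i, p i ∈ S) →
    ∀ σ : Equiv.Perm (Fin k),
      ∑ i, d (p i).1 (p i).2 ≤ ∑ i, d (p i).1 (p (σ i)).2

/-- A set `Γ ⊆ X₀ × ⋯ × X_N` is `c`-cyclically monotone (multimarginal sense). -/
def MultiCCyclicallyMonotone {N : ℕ} {X : Fin (N + 1) → Type*}
    (c : (∀ j, X j) → ℝ) (Γ : Set (∀ j, X j)) : Prop :=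
  ∀ (k : ℕ) (p : Fin k → ∀ j, X j), (∀ i, p i ∈ Γ) →
    ∀ σ : Fin (N + 1) → Equiv.Perm (Fin k), σ 0 = 1 →
      ∑ i, c (p i) ≤ ∑ i, c (fun j => p (σ j i) j)

namespace BBWaux

variable {X Y : Type*}

/-- Cost of the path `x → a₁ → a₂ → ⋯ → aₙ → (⋅, y₀)`. -/
def pathCross (d : X → Y → ℝ) (y₀ : Y) : X → List (X × Y) → ℝ
  | x, [] => d x y₀
  | x, a :: M => d x a.2 + pathCross d y₀ a.1 M

def diagSum (d : X → Y → ℝ) (L : List (X × Y)) : ℝ := (L.map fun a => d a.1 a.2).sum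

lemma sum_get_pair (d : X → Y → ℝ) :
    ∀ (C : List (X × Y)), ∑ i : Fin C.length, d (C.get i).1 (C.get i).2 = diagSum d C
  | [] => by simp [diagSum]
  | a :: T => by
    simp only [List.length_cons]
    rw [Fin.sum_univ_succ]
    have := sum_get_pair d T
    simp only [List.get_eq_getElem, List.getElem_cons_zero, List.getElem_cons_succ,
      Fin.val_succ, Fin.val_zero] at *
    rw [this]
    simp [diagSum]

lemma sum_get_zip (d : X → Y → ℝ) :
    ∀ (A B : List (X × Y)) (h : A.length = B.length),
      ∑ i : Fin A.length, d (A.get i).1 (B.get (Fin.cast h i)).2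
        = (List.zipWith (fun u v => d u.1 v.2) A B).sum
  | [], [], _ => by simp
  | [], b :: B, h => by simp at h
  | a :: A, [], h => by simp at h
  | a :: A, b :: B, h => by
    have h' : A.length = B.length := by simpa using h
    simp only [List.length_cons]
    rw [Fin.sum_univ_succ]
    have ih := sum_get_zip d A B h'
    simp only [List.zipWith_cons_cons, List.sum_cons, List.get_eq_getElem, Fin.val_succ,
      Fin.coe_cast, Fin.val_zero, List.getElem_cons_zero, List.getElem_cons_succ] at *
    rw [ih]

lemma get_finRotate {α : Type*} (cl : α) (T : List α) (i : Fin (cl :: T).length) :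
    (cl :: T).get (finRotate _ i) = (T ++ [cl]).get (Fin.cast (by simp) i) := by
  have hlt : i.val < T.length + 1 := by simpa using i.isLt
  rcases lt_or_eq_of_le (Nat.lt_succ_iff.1 hlt) with hi | hi
  · have hv : ((finRotate ((cl :: T).length)) i).val = i.val + 1 := by
      show ((finRotate (T.length + 1)) i).val = i.val + 1
      rw [finRotate_succ_apply]
      exact Fin.val_add_one_of_lt (Fin.lt_iff_val_lt_val.2 (by simpa using hi))
    simp only [List.get_eq_getElem, hv, Fin.coe_cast]
    rw [List.getElem_cons_succ, List.getElem_append_left hi]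
  · have hv : ((finRotate ((cl :: T).length)) i).val = 0 := by
      show ((finRotate (T.length + 1)) i).val = 0
      rw [finRotate_succ_apply]
      have : i = Fin.last _ := by
        apply Fin.ext
        simpa using hi
      simp [this]
    simp only [List.get_eq_getElem, hv, Fin.coe_cast, List.getElem_cons_zero]
    rw [List.getElem_append_right (le_of_eq hi.symm)]
    simp [hi]

lemma zip_path (d : X → Y → ℝ) (e cl : X × Y) :
    ∀ (a : X × Y) (M : List (X × Y)),
      (List.zipWith (fun u v => d u.1 v.2) (a :: (M ++ [e])) ((M ++ [e]) ++ [cl])).sum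
        = pathCross d e.2 a.1 M + d e.1 cl.2
  | a, [] => by simp [pathCross]
  | a, b :: M => by
    have ih := zip_path d e cl b M
    simp only [List.cons_append, List.zipWith_cons_cons, List.sum_cons, pathCross] at *
    rw [ih]; ring
lemma key_ineq {d : X → Y → ℝ} {S : Set (X × Y)}
    (hS : CCyclicallyMonotone d S) {x₀ : X} {y₀ : Y} (h₀ : (x₀, y₀) ∈ S)
    {x : X} {y : Y} (hxy : (x, y) ∈ S) (L : List (X × Y)) (hL : ∀ a ∈ L, a ∈ S) :
    d x y + diagSum d L + d x₀ y₀ ≤ pathCross d y₀ x L + d x₀ y := by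
  have hmem : ∀ i : Fin ((x, y) :: (L ++ [(x₀, y₀)])).length,
      ((x, y) :: (L ++ [(x₀, y₀)])).get i ∈ S := by
    intro i
    have hm : ((x, y) :: (L ++ [(x₀, y₀)])).get i ∈ ((x, y) :: (L ++ [(x₀, y₀)])) := by
      rw [List.get_eq_getElem]; exact List.getElem_mem _
    rcases List.mem_cons.1 hm with h | h
    · rw [h]; exact hxy
    rcases List.mem_append.1 h with h | h
    · exact hL _ h
    · simp only [List.mem_singleton] at h; rw [h]; exact h₀
  have h1 := hS _ ((x, y) :: (L ++ [(x₀, y₀)])).get hmem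
      (finRotate ((x, y) :: (L ++ [(x₀, y₀)])).length)
  rw [sum_get_pair d] at h1
  have h2 : ∑ i : Fin ((x, y) :: (L ++ [(x₀, y₀)])).length,
      d (((x, y) :: (L ++ [(x₀, y₀)])).get i).1
        (((x, y) :: (L ++ [(x₀, y₀)])).get
          ((finRotate ((x, y) :: (L ++ [(x₀, y₀)])).length) i)).2
      = pathCross d y₀ x L + d x₀ y := by
    have e1 : ∀ i : Fin ((x, y) :: (L ++ [(x₀, y₀)])).length,
        ((x, y) :: (L ++ [(x₀, y₀)])).get ((finRotate _) i)
          = ((L ++ [(x₀, y₀)]) ++ [(x, y)]).get (Fin.cast (by simp) i) :=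
      fun i => get_finRotate (x, y) (L ++ [(x₀, y₀)]) i
    calc ∑ i : Fin ((x, y) :: (L ++ [(x₀, y₀)])).length,
          d (((x, y) :: (L ++ [(x₀, y₀)])).get i).1
            (((x, y) :: (L ++ [(x₀, y₀)])).get ((finRotate _) i)).2
        = ∑ i : Fin ((x, y) :: (L ++ [(x₀, y₀)])).length,
          d (((x, y) :: (L ++ [(x₀, y₀)])).get i).1
            (((L ++ [(x₀, y₀)]) ++ [(x, y)]).get (Fin.cast (by simp) i)).2 := by
          apply Finset.sum_congr rfl; intro i _; rw [e1 i]
      _ = (List.zipWith (fun u v => d u.1 v.2) ((x, y) :: (L ++ [(x₀, y₀)]))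
            ((L ++ [(x₀, y₀)]) ++ [(x, y)])).sum := sum_get_zip d _ _ (by simp)
      _ = pathCross d (x₀, y₀).2 (x, y).1 L + d (x₀, y₀).1 (x, y).2 :=
          zip_path d (x₀, y₀) (x, y) (x, y) L
  rw [h2] at h1
  have h3 : diagSum d ((x, y) :: (L ++ [(x₀, y₀)])) = d x y + diagSum d L + d x₀ y₀ := by
    simp [diagSum]; ring
  rw [h3] at h1
  exact h1

lemma pair_splitting (d : X → Y → ℝ) (S : Set (X × Y))
    (hS : CCyclicallyMonotone d S) :
    ∃ (φ : X → EReal) (ψ : Y → EReal),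
      (∀ x, φ x ≠ ⊤) ∧ (∀ y, ψ y ≠ ⊤) ∧
      (∀ x y, φ x + ψ y ≤ (d x y : EReal)) ∧
      (∀ p ∈ S, φ p.1 + ψ p.2 = (d p.1 p.2 : EReal)) := by
  classical
  rcases S.eq_empty_or_nonempty with rfl | ⟨⟨x₀, y₀⟩, h₀⟩
  · refine ⟨fun _ => ⊥, fun _ => ⊥, fun _ => bot_ne_top, fun _ => bot_ne_top, ?_, ?_⟩
    · intro x y; rw [EReal.bot_add]; exact bot_le
    · intro p hp; exact absurd hp (Set.notMem_empty p)
  · set Adm := {L : List (X × Y) // ∀ a ∈ L, a ∈ S} with hAdm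
    haveI : Nonempty Adm := ⟨⟨[], by simp⟩⟩
    set g : X → List (X × Y) → ℝ :=
      fun x L => pathCross d y₀ x L - diagSum d L - d x₀ y₀ with hg
    set A : X → ℝ := fun x => ⨅ L : Adm, g x L.1 with hA
    have hbdd : ∀ {x : X} {y : Y}, (x, y) ∈ S →
        BddBelow (Set.range fun L : Adm => g x L.1) := by
      intro x y hxy
      refine ⟨d x y - d x₀ y, ?_⟩
      rintro r ⟨L, rfl⟩
      have hk := key_ineq hS h₀ hxy L.1 L.2
      simp only [hg]
      linarith
    have hchain : ∀ (x' x : X) (y : Y) (L : List (X × Y)),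
        g x' ((x, y) :: L) = (d x' y - d x y) + g x L := by
      intro x' x y L
      simp only [hg, pathCross, diagSum, List.map_cons, List.sum_cons]
      ring
    have main : ∀ {x' : X} {y' : Y} {x : X} {y : Y}, (x', y') ∈ S → (x, y) ∈ S →
        A x' ≤ (d x' y - d x y) + A x := by
      intro x' y' x y hx'y' hxy
      have h1 : A x' - (d x' y - d x y) ≤ A x := by
        apply le_ciInf
        intro L
        have hcons : ∀ a ∈ (x, y) :: L.1, a ∈ S := by
          intro a ha
          rcases List.mem_cons.1 ha with rfl | h
          · exact hxy
          · exact L.2 a h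
        have h2 : A x' ≤ g x' ((x, y) :: L.1) :=
          ciInf_le (hbdd hx'y') (⟨(x, y) :: L.1, hcons⟩ : Adm)
        rw [hchain] at h2
        linarith
      linarith
    refine ⟨fun x => if h : ∃ y, (x, y) ∈ S then ((A x : ℝ) : EReal) else ⊥,
        fun y => if h : ∃ x, (x, y) ∈ S then ((d h.choose y - A h.choose : ℝ) : EReal) else ⊥,
        ?_, ?_, ?_, ?_⟩
    · intro x; by_cases h : ∃ y, (x, y) ∈ S
      · simp only [dif_pos h]; exact EReal.coe_ne_top _
      · simp only [dif_neg h]; exact bot_ne_top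
    · intro y; by_cases h : ∃ x, (x, y) ∈ S
      · simp only [dif_pos h]; exact EReal.coe_ne_top _
      · simp only [dif_neg h]; exact bot_ne_top
    · intro x y
      by_cases hx : ∃ y', (x, y') ∈ S
      · by_cases hy : ∃ x', (x', y) ∈ S
        · simp only [dif_pos hx, dif_pos hy, ← EReal.coe_add, EReal.coe_le_coe_iff]
          have h1 := main hx.choose_spec hy.choose_spec
          linarith
        · simp only [dif_neg hy, EReal.add_bot]; exact bot_le
      · simp only [dif_neg hx, EReal.bot_add]; exact bot_le
    · rintro ⟨x, y⟩ hp
      have hx : ∃ y', (x, y') ∈ S := ⟨y, hp⟩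
      have hy : ∃ x', (x', y) ∈ S := ⟨x, hp⟩
      simp only [dif_pos hx, dif_pos hy, ← EReal.coe_add, EReal.coe_eq_coe_iff]
      have h1 := main hp hy.choose_spec
      have h2 := main hy.choose_spec hp
      linarith

end BBWaux

namespace BBWaux2

lemma add_ne_top' {a b : EReal} (ha : a ≠ ⊤) (hb : b ≠ ⊤) : a + b ≠ ⊤ :=
  (EReal.add_lt_top ha hb).ne

lemma coe_finset_sum {ι : Type*} (s : Finset ι) (f : ι → ℝ) :
    ((∑ i ∈ s, f i : ℝ) : EReal) = ∑ i ∈ s, (f i : EReal) :=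
  map_sum (⟨⟨(fun r : ℝ => (r : EReal)), EReal.coe_zero⟩, EReal.coe_add⟩ : ℝ →+ EReal) f s

lemma sum_ne_top {ι : Type*} (s : Finset ι) (f : ι → EReal) (h : ∀ i ∈ s, f i ≠ ⊤) :
    ∑ i ∈ s, f i ≠ ⊤ := by
  classical
  induction s using Finset.induction with
  | empty => simp
  | insert a s hni ih =>
    rw [Finset.sum_insert hni]
    exact add_ne_top' (h a (Finset.mem_insert_self a s))
      (ih fun i hi => h i (Finset.mem_insert_of_mem hi))

end BBWaux2

open BBWaux BBWaux2

/-- **Bartz–Bauschke–Wang.** If a real-valued cost decomposes as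
`c(x₁,…,x_N) = ∑_{i<j} c_{i,j}(x_i,x_j)` and every projection `Γ_{i,j}` of `Γ` onto
`X_i × X_j` is `c_{i,j}`-cyclically monotone, then `Γ` is `c`-cyclically monotone in
the multimarginal sense and moreover `Γ` is `c`-splitting. -/
theorem multiCCyclicallyMonotone_and_splitting_of_pairwise
    {N : ℕ} {X : Fin (N + 1) → Type*}
    (cij : ∀ i j : Fin (N + 1), X i → X j → ℝ)
    (c : (∀ j, X j) → ℝ)
    (hc : ∀ x, c x =
      ∑ q ∈ Finset.univ.filter (fun q : Fin (N + 1) × Fin (N + 1) => q.1 < q.2),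
        cij q.1 q.2 (x q.1) (x q.2))
    (Γ : Set (∀ j, X j))
    (hproj : ∀ i j : Fin (N + 1), i < j →
      CCyclicallyMonotone (cij i j) ((fun x : ∀ l, X l => (x i, x j)) '' Γ)) :
    MultiCCyclicallyMonotone c Γ ∧
      ∃ φ : ∀ j, X j → EReal,
        (∀ j x, φ j x ≠ ⊤) ∧
        (∀ x : ∀ j, X j, ∑ j, φ j (x j) ≤ (c x : EReal)) ∧
        (∀ x ∈ Γ, ∑ j, φ j (x j) = (c x : EReal)) := by
  classical
  set P := Finset.univ.filter (fun q : Fin (N + 1) × Fin (N + 1) => q.1 < q.2) with hP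
  constructor
  · -- multimarginal cyclic monotonicity
    intro k p hp σ _
    have hrw : ∀ (f : Fin k → ∀ j, X j),
        ∑ i, c (f i) = ∑ q ∈ P, ∑ i, cij q.1 q.2 (f i q.1) (f i q.2) := by
      intro f
      rw [Finset.sum_comm]
      exact Finset.sum_congr rfl fun i _ => hc (f i)
    rw [hrw p, hrw (fun i => fun j => p (σ j i) j)]
    apply Finset.sum_le_sum
    rintro ⟨a, b⟩ hq
    have hab : a < b := (Finset.mem_filter.1 hq).2
    have hmono := hproj a b hab k (fun i => (p i a, p i b))
      (fun i => ⟨p i, hp i, rfl⟩) (((σ a)⁻¹).trans (σ b))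
    simp only [Equiv.trans_apply] at hmono
    have hre : ∑ i, cij a b (p (σ a i) a) (p (σ b i) b)
        = ∑ i, cij a b (p i a) (p ((σ b) ((σ a)⁻¹ i)) b) := by
      rw [← Equiv.sum_comp (σ a) (fun i => cij a b (p i a) (p ((σ b) ((σ a)⁻¹ i)) b))]
      apply Finset.sum_congr rfl
      intro i _
      simp
    calc ∑ i, cij a b (p i a) (p i b) ≤ _ := hmono
      _ = ∑ i, cij a b (p (σ a i) a) (p (σ b i) b) := hre.symm
  · -- splitting
    have pairs : ∀ a b : Fin (N + 1), a < b →
        ∃ (φ : X a → EReal) (ψ : X b → EReal),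
          (∀ x, φ x ≠ ⊤) ∧ (∀ y, ψ y ≠ ⊤) ∧
          (∀ x y, φ x + ψ y ≤ (cij a b x y : EReal)) ∧
          (∀ p ∈ ((fun x : ∀ l, X l => (x a, x b)) '' Γ),
            φ p.1 + ψ p.2 = (cij a b p.1 p.2 : EReal)) :=
      fun a b hab => pair_splitting (cij a b) _ (hproj a b hab)
    choose Φ Ψ hΦtop hΨtop hle heq using pairs
    have hsum_rearrange : ∀ (Φ : ∀ a b : Fin (N + 1), a < b → X a → EReal)
        (Ψ : ∀ a b : Fin (N + 1), a < b → X b → EReal) (x : ∀ j, X j),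
        (∑ j, ((∑ b : Fin (N + 1), if h : j < b then Φ j b h (x j) else 0)
          + ∑ a : Fin (N + 1), if h : a < j then Ψ a j h (x j) else 0))
        = ∑ q : Fin (N + 1) × Fin (N + 1),
            if h : q.1 < q.2 then Φ q.1 q.2 h (x q.1) + Ψ q.1 q.2 h (x q.2) else 0 := by
      intro Φ Ψ x
      rw [Finset.sum_add_distrib]
      have h1 : (∑ j, ∑ b : Fin (N + 1), if h : j < b then Φ j b h (x j) else 0)
          = ∑ q : Fin (N + 1) × Fin (N + 1),
              if h : q.1 < q.2 then Φ q.1 q.2 h (x q.1) else 0 := by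
        rw [Fintype.sum_prod_type]
      have h2 : (∑ j, ∑ a : Fin (N + 1), if h : a < j then Ψ a j h (x j) else 0)
          = ∑ q : Fin (N + 1) × Fin (N + 1),
              if h : q.1 < q.2 then Ψ q.1 q.2 h (x q.2) else 0 := by
        rw [Fintype.sum_prod_type, Finset.sum_comm]
      rw [h1, h2, ← Finset.sum_add_distrib]
      apply Finset.sum_congr rfl
      intro q _
      by_cases h : q.1 < q.2
      · rw [dif_pos h, dif_pos h, dif_pos h]
      · rw [dif_neg h, dif_neg h, dif_neg h, add_zero]
    refine ⟨fun j x =>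
        (∑ b : Fin (N + 1), if h : j < b then Φ j b h x else 0)
          + ∑ a : Fin (N + 1), if h : a < j then Ψ a j h x else 0, ?_, ?_, ?_⟩
    · intro j x
      apply add_ne_top'
      · apply sum_ne_top
        intro b _
        split
        · exact hΦtop j b _ x
        · simp
      · apply sum_ne_top
        intro a _
        split
        · exact hΨtop a j _ x
        · simp
    · intro x
      rw [hsum_rearrange Φ Ψ x, hc x, coe_finset_sum, Finset.sum_filter]
      apply Finset.sum_le_sum
      intro q _
      by_cases h : q.1 < q.2
      · rw [dif_pos h, if_pos h]
        exact hle q.1 q.2 h (x q.1) (x q.2)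
      · rw [dif_neg h, if_neg h]
    · intro x hx
      rw [hsum_rearrange Φ Ψ x, hc x, coe_finset_sum, Finset.sum_filter]
      apply Finset.sum_congr rfl
      intro q _
      by_cases h : q.1 < q.2
      · rw [dif_pos h, if_pos h]
        exact heq q.1 q.2 h (x q.1, x q.2) ⟨x, hx, rfl⟩
      · rw [dif_neg h, if_neg h]
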